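/- arXiv:2511.08078 — 4 statements merged into one kernel-verified Lean document; each statement's English description precedes it below -/
import Mathlib

section
/- If the maximal value of the induced MDP over a set of assignments η is below the threshold ν, then every assignment θ in η has induced Markov chain value below ν. Formally: if V^max(C[η]) < ν then for all θ ∈ η, V(C[θ]) < ν. -/
open scoped ENNReal Classical

/-- A finite Markov chain with states `S`, an initial state, transition
probabilities and nonnegative state rewards. -/
structure MC (S : Type) [Fintype S] where
  init : S
  tr : S → S → NNReal
  rew : S → NNReal

namespace MC

variable {S : Type} [Fintype S]

/-- The `n`-step state distribution of a Markov chain. -/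
noncomputable def dist (D : MC S) : ℕ → S → NNReal
  | 0 => fun s => if s = D.init then 1 else 0
  | n + 1 => fun s => ∑ t, dist D n t * D.tr t s

/-- The expected total (undiscounted, indefinite-horizon) reward of a Markov chain:
`E[∑_i R(s_i)] = ∑_n ∑_s Pr_n(s) · R(s)`. -/
noncomputable def val (D : MC S) : ℝ≥0∞ :=
  ∑' n, ∑ s, (D.dist n s : ℝ≥0∞) * (D.rew s : ℝ≥0∞)

/-- States reachable (with positive probability) from the initial state. -/
inductive Reach (D : MC S) : S → Prop
  | init : Reach D D.init
  | step {s t : S} : Reach D s → 0 < D.tr s t → Reach D t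

/-- A state is transient iff the expected number of visits to it is finite. -/
def Transient (D : MC S) (s : S) : Prop := (∑' n, (D.dist n s : ℝ≥0∞)) < ⊤

end MC

/-- A finite Markov decision process with available-action sets `act`,
partial transition function `tr` and state rewards `rew`. -/
structure MDP (S A : Type) [Fintype S] [Fintype A] where
  init : S
  act : S → Finset A
  tr : S → A → S → NNReal
  rew : S → NNReal

namespace MDP

variable {S A : Type} [Fintype S] [Fintype A]

/-- A deterministic memoryless policy selects an available action in every state. -/
def IsPolicy (M : MDP S A) (π : S → A) : Prop := ∀ s, π s ∈ M.act s

/-- The Markov chain induced by a (memoryless deterministic) policy. -/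
def induce (M : MDP S A) (π : S → A) : MC S :=
  ⟨M.init, fun s => M.tr s (π s), M.rew⟩

/-- The maximal value `V^max(M) = max_π V(M[π])` over deterministic memoryless policies. -/
noncomputable def vmax (M : MDP S A) : ℝ≥0∞ :=
  ⨆ π : {π : S → A // M.IsPolicy π}, (M.induce π.1).val

/-- The minimal value `V^min(M) = min_π V(M[π])` over deterministic memoryless policies. -/
noncomputable def vmin (M : MDP S A) : ℝ≥0∞ :=
  ⨅ π : {π : S → A // M.IsPolicy π}, (M.induce π.1).val

/-- States of the MDP reachable (via available actions, with positive probability)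
from the initial state. -/
inductive Reach (M : MDP S A) : S → Prop
  | init : Reach M M.init
  | step {s t : S} {α : A} : Reach M s → α ∈ M.act s → 0 < M.tr s α t → Reach M t

end MDP

/-- A colored MDP `C = (M, 𝕍, κ)`: an MDP together with a finite constrained
parameter space of assignments `θ : P → ℤ` and a coloring `κ` such that every
assignment selects exactly one available action in every state. -/
structure CMDP (S A P : Type) [Fintype S] [Fintype A] where
  M : MDP S A
  space : Set (P → ℤ)
  finite : space.Finite
  coloring : S → A → Set (P → ℤ)
  unique : ∀ θ ∈ space, ∀ s : S, ∃! α : A, α ∈ M.act s ∧ θ ∈ coloring s α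

namespace CMDP

variable {S A P : Type} [Fintype S] [Fintype A] [Nonempty A]

/-- The induced MDP `C[η]`: keep at each state exactly the actions `α` with
`η ∩ κ(s,α) ≠ ∅`. -/
noncomputable def induced (C : CMDP S A P) (η : Set (P → ℤ)) : MDP S A where
  init := C.M.init
  act := fun s => (C.M.act s).filter fun α => (η ∩ C.coloring s α).Nonempty
  tr := C.M.tr
  rew := C.M.rew

/-- The (unique, for `θ ∈ 𝕍`) policy selected by an assignment `θ`. -/
noncomputable def policyOf (C : CMDP S A P) (θ : P → ℤ) : S → A := fun s =>
  if h : ∃ α : A, α ∈ C.M.act s ∧ θ ∈ C.coloring s α then h.choose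
  else Classical.arbitrary A

/-- The Markov chain `C[θ]` induced by a single assignment `θ`. -/
noncomputable def chain (C : CMDP S A P) (θ : P → ℤ) : MC S :=
  C.M.induce (C.policyOf θ)

/-- The value `V(C[θ])` of the Markov chain induced by assignment `θ`. -/
noncomputable def val (C : CMDP S A P) (θ : P → ℤ) : ℝ≥0∞ :=
  (C.chain θ).val

end CMDP

/-- If `V^max(C[η]) < ν` then `V(C[θ]) < ν` for every `θ ∈ η`. -/
theorem stmt_0 {S A P : Type} [Fintype S] [Fintype A] [Nonempty A]
    (C : CMDP S A P) (η : Set (P → ℤ)) (hη : η ⊆ C.space) (ν : ℝ≥0∞)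
    (h : (C.induced η).vmax < ν) :
    ∀ θ ∈ η, C.val θ < ν := by
  intro θ hθ
  have hex : ∀ s : S, ∃ α : A, α ∈ C.M.act s ∧ θ ∈ C.coloring s α := fun s =>
    ((C.unique θ (hη hθ) s).exists)
  have hpol : (C.induced η).IsPolicy (C.policyOf θ) := by
    intro s
    simp only [CMDP.induced, Finset.mem_filter]
    have h1 := (hex s).choose_spec
    unfold CMDP.policyOf
    rw [dif_pos (hex s)]
    exact ⟨h1.1, ⟨θ, hθ, h1.2⟩⟩
  have heq : (C.induced η).induce (C.policyOf θ) = C.chain θ := rfl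
  have hle : C.val θ ≤ (C.induced η).vmax := by
    rw [CMDP.val, ← heq]
    exact le_iSup (fun π : {π : S → A // (C.induced η).IsPolicy π} =>
      ((C.induced η).induce π.1).val) ⟨C.policyOf θ, hpol⟩
  exact lt_of_le_of_lt hle h
end

section
/- If the minimal value of the induced MDP over a set of assignments η is at least the threshold ν, then every assignment θ ∈ η satisfies V(C[θ]) ≥ ν. -/
open scoped ENNReal Classical

/-- If `V^min(C[η]) ≥ ν` then `V(C[θ]) ≥ ν` for every `θ ∈ η`. -/
theorem stmt_1 {S A P : Type} [Fintype S] [Fintype A] [Nonempty A]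
    (C : CMDP S A P) (η : Set (P → ℤ)) (hη : η ⊆ C.space) (ν : ℝ≥0∞)
    (h : ν ≤ (C.induced η).vmin) :
    ∀ θ ∈ η, ν ≤ C.val θ := by
  intro θ hθ
  have hpol : (C.induced η).IsPolicy (C.policyOf θ) := by
    intro s
    obtain ⟨α, ⟨hα1, hα2⟩, -⟩ := C.unique θ (hη hθ) s
    have hex : ∃ α : A, α ∈ C.M.act s ∧ θ ∈ C.coloring s α := ⟨α, hα1, hα2⟩
    have hch := hex.choose_spec
    simp only [CMDP.policyOf, dif_pos hex, CMDP.induced, Finset.mem_filter]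
    exact ⟨hch.1, θ, hθ, hch.2⟩
  have heq : (C.induced η).induce (C.policyOf θ) = C.chain θ := rfl
  calc ν ≤ (C.induced η).vmin := h
    _ ≤ ((C.induced η).induce (C.policyOf θ)).val :=
        iInf_le _ (⟨C.policyOf θ, hpol⟩ : {π // (C.induced η).IsPolicy π})
    _ = C.val θ := congrArg MC.val heq
end

section
/- Let K be a partial assignment containing the literal viable(p₁,...,pₙ), and let η = {θ ∈ 𝕍 : θ satisfies K \ {viable}}. If V^max(C[η]) < ν, then K ∪ 𝕋_C is inconsistent (K is a 𝕋_C-conflict): no full assignment θ ∈ 𝕍 simultaneously satisfies all literals of K and the theory 𝕋_C. -/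
open scoped ENNReal Classical

/-- An assignment `θ` satisfies a partial assignment `K`
(a set of literals `p = z`) if it makes all its literals true. -/
def Sat {P : Type} (θ : P → ℤ) (K : Set (P × ℤ)) : Prop := ∀ l ∈ K, θ l.1 = l.2

/-- If `viable ∈ K` and `V^max(C[η]) < ν` for
`η = {θ ∈ 𝕍 : θ satisfies K \ {viable}}`, then `K` is a `𝕋_C`-conflict: no
`θ ∈ 𝕍` satisfies the literals of `K` while being viable (`V(C[θ]) ≥ ν`). -/
theorem stmt_6 {S A P : Type} [Fintype S] [Fintype A] [Nonempty A]
    (C : CMDP S A P) (K : Set (P × ℤ)) (ν : ℝ≥0∞)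
    (h : (C.induced {θ ∈ C.space | Sat θ K}).vmax < ν) :
    ¬ ∃ θ ∈ C.space, Sat θ K ∧ ν ≤ C.val θ := by
  rintro ⟨θ, hθ, hK, hν⟩
  set η : Set (P → ℤ) := {θ ∈ C.space | Sat θ K} with hη
  have hθη : θ ∈ η := ⟨hθ, hK⟩
  have hpol : (C.induced η).IsPolicy (C.policyOf θ) := by
    intro s
    obtain ⟨α, ⟨hα1, hα2⟩, _⟩ := C.unique θ hθ s
    have hex : ∃ α : A, α ∈ C.M.act s ∧ θ ∈ C.coloring s α := ⟨α, hα1, hα2⟩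
    have hcs := hex.choose_spec
    simp only [CMDP.policyOf, dif_pos hex, CMDP.induced, Finset.mem_filter]
    exact ⟨hcs.1, θ, hθη, hcs.2⟩
  have hval : C.val θ ≤ (C.induced η).vmax := by
    have heq : C.chain θ = (C.induced η).induce (C.policyOf θ) := rfl
    calc C.val θ = ((C.induced η).induce (C.policyOf θ)).val := by
          rw [CMDP.val, heq]
      _ ≤ _ := le_iSup (fun π : {π // (C.induced η).IsPolicy π} =>
          ((C.induced η).induce π.1).val) ⟨_, hpol⟩
  exact absurd h (not_lt.mpr (hν.trans hval))
end

section
/- Symmetrically: if ¬viable(p₁,...,pₙ) ∈ K and V^min(C[η]) ≥ ν, where η is the set of assignments satisfying K \ {¬viable}, then K is a 𝕋_C-conflict, i.e., no assignment θ ∈ 𝕍 satisfies K together with the theory 𝕋_C. -/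
open scoped ENNReal Classical

/-- If `¬viable ∈ K` and `V^min(C[η]) ≥ ν` for
`η = {θ ∈ 𝕍 : θ satisfies K \ {¬viable}}`, then `K` is a `𝕋_C`-conflict: no
`θ ∈ 𝕍` satisfies the literals of `K` while being non-viable (`V(C[θ]) < ν`). -/
theorem stmt_7 {S A P : Type} [Fintype S] [Fintype A] [Nonempty A]
    (C : CMDP S A P) (K : Set (P × ℤ)) (ν : ℝ≥0∞)
    (h : ν ≤ (C.induced {θ ∈ C.space | Sat θ K}).vmin) :
    ¬ ∃ θ ∈ C.space, Sat θ K ∧ C.val θ < ν := by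
  rintro ⟨θ, hθ, hsat, hlt⟩
  set η : Set (P → ℤ) := {θ ∈ C.space | Sat θ K} with hη
  have hpol : (C.induced η).IsPolicy (C.policyOf θ) := by
    intro s
    obtain ⟨α, ⟨hα1, hα2⟩, -⟩ := C.unique θ hθ s
    have hex : ∃ α : A, α ∈ C.M.act s ∧ θ ∈ C.coloring s α := ⟨α, hα1, hα2⟩
    have hspec := hex.choose_spec
    simp only [CMDP.policyOf, dif_pos hex, CMDP.induced, Finset.mem_filter]
    exact ⟨hspec.1, θ, ⟨hθ, hsat⟩, hspec.2⟩
  have hle : (C.induced η).vmin ≤ C.val θ := by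
    have := iInf_le (fun π : {π : S → A // (C.induced η).IsPolicy π} =>
      ((C.induced η).induce π.1).val) ⟨C.policyOf θ, hpol⟩
    exact this
  exact absurd hlt (not_lt.mpr (le_trans h hle))
end
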